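/- Let M > 0 and let g ∈ X₁ be continuously differentiable on ℝ ∖ {0} with ‖g‖_∞ ≤ M and |x · g'(x)| ≤ M for all x ≠ 0. Define B(x) = κ / (x · h⁻¹(x) · ((h⁻¹)'(x))²) for x ≠ 0. Then there is a constant c(μ,ν,M) depending only on μ, ν, M such that |B'(x)/(h⁻¹)'(x)| ≤ c(μ,ν,M) |x|^(1−4ν) for 0 < |x| ≤ 1, and |B'(x)/(h⁻¹)'(x)| ≤ c(μ,ν,M) |x|^(1−4μ) for |x| ≥ 1. -/

import Mathlib

open MeasureTheory Real Filter Set Bornology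

set_option linter.unusedSectionVars false
set_option maxHeartbeats 1000000

/-- `h⁻¹(x) = ∫₀ˣ |y|^(ν−1)(y²+1)^((μ−ν)/2) e^(g(y)) dy`. -/
noncomputable def hInv (μ ν : ℝ) (g : ℝ → ℝ) (x : ℝ) : ℝ :=
  ∫ y in (0:ℝ)..x, |y| ^ (ν - 1) * (y ^ 2 + 1) ^ ((μ - ν) / 2) * Real.exp (g y)

/-- `(h⁻¹)'(x) = |x|^(ν−1)(x²+1)^((μ−ν)/2) e^(g(x))`. -/
noncomputable def hInvDeriv (μ ν : ℝ) (g : ℝ → ℝ) (x : ℝ) : ℝ :=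
  |x| ^ (ν - 1) * (x ^ 2 + 1) ^ ((μ - ν) / 2) * Real.exp (g x)

/-- The constant `κ = κ(g)` determined by `∫_ℝ κ/(x h⁻¹(x) (h⁻¹)'(x)) dx = (μ−ν)π`. -/
noncomputable def kappa (μ ν : ℝ) (g : ℝ → ℝ) : ℝ :=
  (μ - ν) * Real.pi / ∫ x : ℝ, 1 / (x * hInv μ ν g x * hInvDeriv μ ν g x)

/-- `F'(x) = κ/(x h⁻¹(x) (h⁻¹)'(x))`. -/
noncomputable def Fder (μ ν : ℝ) (g : ℝ → ℝ) (x : ℝ) : ℝ :=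
  kappa μ ν g / (x * hInv μ ν g x * hInvDeriv μ ν g x)

/-- `F = F_g`, the antiderivative of `Fder` with `F(+∞) = 0`. -/
noncomputable def Fg (μ ν : ℝ) (g : ℝ → ℝ) (x : ℝ) : ℝ :=
  -∫ y in Set.Ioi x, Fder μ ν g y

/-- `θ(x)`: the continuous branch of `arg (x − i)`, i.e. `arctan(−1/x)` for `x > 0`,
`arctan(−1/x) − π` for `x < 0`, and `−π/2` at `x = 0`. -/
noncomputable def theta (x : ℝ) : ℝ :=
  if x = 0 then -(Real.pi / 2)
  else if x < 0 then Real.arctan (-1 / x) - Real.pi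
  else Real.arctan (-1 / x)

/-- `HasHilbertAt f x v`: the principal value `(1/π) lim_{ε→0⁺} ∫_{|x−y|>ε} f(y)/(x−y) dy`
exists and equals `v`. -/
def HasHilbertAt (f : ℝ → ℝ) (x v : ℝ) : Prop :=
  Filter.Tendsto
    (fun ε : ℝ => (1 / Real.pi) * ∫ y in {y : ℝ | ε < |x - y|}, f y / (x - y))
    (nhdsWithin 0 (Set.Ioi 0)) (nhds v)

/-- `G(x) = g(x) + (1/2)(μ−ν) ln(x²+1)`. -/
noncomputable def Gfun (μ ν : ℝ) (g : ℝ → ℝ) (x : ℝ) : ℝ :=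
  g x + (1 / 2) * (μ - ν) * Real.log (x ^ 2 + 1)

/-- `g` is a solution of system (3.12): `g` is bounded and continuous, the principal
value `T[g](x) = H(F_g − (μ−ν)θ)(x)` exists for every `x`, and `g = T[g]`. -/
def IsSolution (μ ν : ℝ) (g : ℝ → ℝ) : Prop :=
  Continuous g ∧ (∃ M : ℝ, ∀ x, |g x| ≤ M) ∧
    ∀ x : ℝ, HasHilbertAt (fun y => Fg μ ν g y - (μ - ν) * theta y) x (g x)
/-- `B(x) = κ/(x h⁻¹(x) ((h⁻¹)'(x))²)`, i.e. `B = F'/(h⁻¹)' = b' ∘ h⁻¹`. -/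
noncomputable def Bfun (μ ν : ℝ) (g : ℝ → ℝ) (x : ℝ) : ℝ :=
  kappa μ ν g / (x * hInv μ ν g x * (hInvDeriv μ ν g x) ^ 2)

section Bounds
variable {μ ν M : ℝ} {g : ℝ → ℝ}
variable (hμ1 : 1 / 2 < μ) (hμ2 : μ ≤ 2) (hν1 : 0 < ν) (hν2 : ν < 1 / 2)
variable (hgM : ∀ x : ℝ, |g x| ≤ M)

include hν1 hν2 hμ1 in
lemma phi_lower1 (hgM : ∀ x : ℝ, |g x| ≤ M) {y : ℝ} (hy : 0 < y) :
    Real.exp (-M) * y ^ (ν - 1) ≤ hInvDeriv μ ν g y := by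
  have h1 : (1:ℝ) ≤ (y ^ 2 + 1) ^ ((μ - ν) / 2) :=
    Real.one_le_rpow (by nlinarith) (by linarith)
  have h2 : Real.exp (-M) ≤ Real.exp (g y) :=
    Real.exp_le_exp.2 (by have := (abs_le.1 (hgM y)).1; linarith)
  have h3 : (0:ℝ) < y ^ (ν - 1) := Real.rpow_pos_of_pos hy _
  rw [hInvDeriv, abs_of_pos hy]
  calc Real.exp (-M) * y ^ (ν - 1) = y ^ (ν - 1) * 1 * Real.exp (-M) := by ring
  _ ≤ y ^ (ν - 1) * (y ^ 2 + 1) ^ ((μ - ν) / 2) * Real.exp (g y) := by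
      gcongr

include hν1 hν2 hμ1 in
lemma phi_lower2 (hgM : ∀ x : ℝ, |g x| ≤ M) {y : ℝ} (hy : 0 < y) :
    Real.exp (-M) * y ^ (μ - 1) ≤ hInvDeriv μ ν g y := by
  have h1 : y ^ (μ - ν) ≤ (y ^ 2 + 1) ^ ((μ - ν) / 2) := by
    have : y ^ (μ - ν) = (y ^ 2) ^ ((μ - ν) / 2) := by
      rw [← Real.rpow_natCast y 2, ← Real.rpow_mul hy.le]
      congr 1; ring
    rw [this]
    exact Real.rpow_le_rpow (by positivity) (by linarith) (by linarith)
  have h2 : Real.exp (-M) ≤ Real.exp (g y) :=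
    Real.exp_le_exp.2 (by have := (abs_le.1 (hgM y)).1; linarith)
  have h3 : (0:ℝ) < y ^ (ν - 1) := Real.rpow_pos_of_pos hy _
  have key : y ^ (μ - 1) = y ^ (ν - 1) * y ^ (μ - ν) := by
    rw [← Real.rpow_add hy]; ring_nf
  rw [hInvDeriv, abs_of_pos hy, key]
  calc Real.exp (-M) * (y ^ (ν - 1) * y ^ (μ - ν))
      = y ^ (ν - 1) * y ^ (μ - ν) * Real.exp (-M) := by ring
  _ ≤ y ^ (ν - 1) * (y ^ 2 + 1) ^ ((μ - ν) / 2) * Real.exp (g y) := by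
      gcongr

include hν1 hν2 hμ1 in
lemma phi_upper (hgM : ∀ x : ℝ, |g x| ≤ M) {y : ℝ} (hy : 0 < y) :
    hInvDeriv μ ν g y ≤ Real.exp M * ((y + 1) ^ (μ - ν) * y ^ (ν - 1)) := by
  have h1 : (y ^ 2 + 1) ^ ((μ - ν) / 2) ≤ (y + 1) ^ (μ - ν) := by
    have : (y + 1) ^ (μ - ν) = ((y + 1) ^ 2) ^ ((μ - ν) / 2) := by
      rw [← Real.rpow_natCast (y+1) 2, ← Real.rpow_mul (by linarith)]
      congr 1; ring
    rw [this]
    exact Real.rpow_le_rpow (by positivity) (by nlinarith) (by linarith)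
  have h2 : Real.exp (g y) ≤ Real.exp M :=
    Real.exp_le_exp.2 ((abs_le.1 (hgM y)).2)
  have h3 : (0:ℝ) < y ^ (ν - 1) := Real.rpow_pos_of_pos hy _
  rw [hInvDeriv]
  calc |y| ^ (ν - 1) * (y ^ 2 + 1) ^ ((μ - ν) / 2) * Real.exp (g y)
      ≤ y ^ (ν - 1) * (y + 1) ^ (μ - ν) * Real.exp M := by
        rw [abs_of_pos hy]
        gcongr
  _ = Real.exp M * ((y + 1) ^ (μ - ν) * y ^ (ν - 1)) := by ring

lemma phi_pos (hy : (y:ℝ) ≠ 0) : 0 < hInvDeriv μ ν g y := by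
  rw [hInvDeriv]
  have : (0:ℝ) < |y| := abs_pos.2 hy
  positivity

end Bounds
section H
variable {μ ν M : ℝ} {g : ℝ → ℝ}
variable (hμ1 : 1 / 2 < μ) (hμ2 : μ ≤ 2) (hν1 : 0 < ν) (hν2 : ν < 1 / 2)

include hν1 hν2 hμ1 in
lemma phi_contOn (hc : Continuous g) :
    ContinuousOn (hInvDeriv μ ν g) {(0:ℝ)}ᶜ := by
  intro x hx
  have hx0 : x ≠ 0 := hx
  apply ContinuousAt.continuousWithinAt
  apply ContinuousAt.mul
  apply ContinuousAt.mul
  · exact (continuous_abs.continuousAt).rpow_const (Or.inl (abs_ne_zero.2 hx0))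
  · exact (ContinuousAt.rpow_const (by fun_prop) (Or.inl (by positivity)))
  · exact (Real.continuous_exp.comp hc).continuousAt

include hν1 hν2 hμ1 in
lemma phi_intble (hc : Continuous g) (hgM : ∀ x : ℝ, |g x| ≤ M) {x : ℝ} (hx : 0 < x) :
    IntervalIntegrable (hInvDeriv μ ν g) volume 0 x := by
  rw [intervalIntegrable_iff_integrableOn_Ioo_of_le hx.le]
  have hdom : IntegrableOn (fun y : ℝ => Real.exp M * (x + 1) ^ (μ - ν) * y ^ (ν - 1))
      (Ioo (0:ℝ) x) := by
    exact ((intervalIntegral.integrableOn_Ioo_rpow_iff hx).2 (by linarith)).const_mul _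
  refine Integrable.mono' hdom ?_ ?_
  · exact ((phi_contOn hμ1 hν1 hν2 hc).mono (by intro y hy; exact ne_of_gt hy.1)
      |>.aestronglyMeasurable measurableSet_Ioo)
  · filter_upwards [ae_restrict_mem measurableSet_Ioo] with y hy
    have h1 := phi_upper hμ1 hν1 hν2 (g := g) (fun z => hgM z) hy.1
    have h2 : (y + 1) ^ (μ - ν) ≤ (x + 1) ^ (μ - ν) :=
      Real.rpow_le_rpow (by linarith [hy.1]) (by linarith [hy.2.le]) (by linarith)
    have hpos : 0 < hInvDeriv μ ν g y := phi_pos (ne_of_gt hy.1)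
    rw [Real.norm_eq_abs, abs_of_pos hpos]
    calc hInvDeriv μ ν g y ≤ Real.exp M * ((y + 1) ^ (μ - ν) * y ^ (ν - 1)) := h1
    _ ≤ Real.exp M * (x + 1) ^ (μ - ν) * y ^ (ν - 1) := by
        rw [mul_assoc]
        gcongr
        exact Real.rpow_nonneg (by linarith [hy.1]) _

include hν1 hν2 hμ1 in
lemma h_hasDeriv (hc : Continuous g) (hgM : ∀ x : ℝ, |g x| ≤ M) {x : ℝ} (hx : x ≠ 0) :
    HasDerivAt (hInv μ ν g) (hInvDeriv μ ν g x) x := by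
  have hmeas : StronglyMeasurableAtFilter (hInvDeriv μ ν g) (nhds x) volume := by
    refine ⟨{(0:ℝ)}ᶜ, ?_, (phi_contOn hμ1 hν1 hν2 hc).aestronglyMeasurable
      (measurableSet_singleton 0).compl⟩
    exact IsOpen.mem_nhds (isOpen_compl_singleton) hx
  have hconti : ContinuousAt (hInvDeriv μ ν g) x :=
    (phi_contOn hμ1 hν1 hν2 hc).continuousAt (IsOpen.mem_nhds isOpen_compl_singleton hx)
  rcases lt_or_gt_of_ne hx with hneg | hpos
  · have hint : IntervalIntegrable (hInvDeriv μ ν g) volume 0 x := by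
      rw [IntervalIntegrable.iff_comp_neg]
      have := phi_intble hμ1 hν1 hν2 (g := fun y => g (-y))
        (hc.comp continuous_neg) (fun z => hgM (-z)) (x := -x) (by linarith)
      simp only [neg_zero]
      convert this using 1
      funext y
      simp [hInvDeriv, abs_neg, neg_pow]
    exact intervalIntegral.integral_hasDerivAt_right hint hmeas hconti
  · exact intervalIntegral.integral_hasDerivAt_right (phi_intble hμ1 hν1 hν2 hc hgM hpos)
      hmeas hconti

end H
section HBounds
variable {μ ν M : ℝ} {g : ℝ → ℝ}
variable (hμ1 : 1 / 2 < μ) (hμ2 : μ ≤ 2) (hν1 : 0 < ν) (hν2 : ν < 1 / 2)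
variable (hc : Continuous g) (hgM : ∀ x : ℝ, |g x| ≤ M)

lemma ae_ne_zero_restrict (s : Set ℝ) : ∀ᵐ y ∂(volume.restrict s), y ≠ (0:ℝ) := by
  refine ae_restrict_of_ae ?_
  rw [ae_iff]
  have h : {y : ℝ | ¬ y ≠ 0} = {(0:ℝ)} := by ext y; simp
  rw [h]
  exact measure_singleton 0

include hμ1 hν1 hν2 hc hgM in
lemma h_lower (p : ℝ) (hp1 : 0 < p) (hple : p = ν ∨ p = μ) {x : ℝ} (hx : 0 < x) :
    Real.exp (-M) / p * x ^ p ≤ hInv μ ν g x := by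
  have hint := phi_intble hμ1 hν1 hν2 hc hgM hx
  have hintl : IntervalIntegrable (fun y : ℝ => Real.exp (-M) * y ^ (p - 1)) volume 0 x :=
    (intervalIntegral.intervalIntegrable_rpow' (by linarith)).const_mul _
  have hmono : (fun y : ℝ => Real.exp (-M) * y ^ (p - 1)) ≤ᵐ[volume.restrict (Set.Icc 0 x)]
      hInvDeriv μ ν g := by
    filter_upwards [ae_restrict_mem measurableSet_Icc, ae_ne_zero_restrict _] with y hy hy0
    replace hy : 0 < y ∧ y ≤ x := ⟨lt_of_le_of_ne hy.1 (Ne.symm hy0), hy.2⟩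
    rcases hple with h | h
    · rw [h]; exact phi_lower1 hμ1 hν1 hν2 hgM hy.1
    · rw [h]; exact phi_lower2 hμ1 hν1 hν2 hgM hy.1
  have := intervalIntegral.integral_mono_ae_restrict hx.le hintl hint
    (by exact hmono)
  rw [hInv]
  refine le_trans (le_of_eq ?_) this
  rw [intervalIntegral.integral_const_mul, integral_rpow (Or.inl (by linarith))]
  rw [Real.zero_rpow (by linarith : p - 1 + 1 ≠ 0)]
  have : p - 1 + 1 = p := by ring
  rw [this]
  field_simp
  ring

include hμ1 hν1 hν2 hc hgM in
lemma h_upper {x : ℝ} (hx : 0 < x) :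
    hInv μ ν g x ≤ Real.exp M * (x + 1) ^ (μ - ν) / ν * x ^ ν := by
  have hint := phi_intble hμ1 hν1 hν2 hc hgM hx
  have hintu : IntervalIntegrable
      (fun y : ℝ => Real.exp M * (x + 1) ^ (μ - ν) * y ^ (ν - 1)) volume 0 x :=
    (intervalIntegral.intervalIntegrable_rpow' (by linarith)).const_mul _
  have hmono : hInvDeriv μ ν g ≤ᵐ[volume.restrict (Set.Icc 0 x)]
      (fun y : ℝ => Real.exp M * (x + 1) ^ (μ - ν) * y ^ (ν - 1)) := by
    filter_upwards [ae_restrict_mem measurableSet_Icc, ae_ne_zero_restrict _] with y hy hy0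
    replace hy : 0 < y ∧ y ≤ x := ⟨lt_of_le_of_ne hy.1 (Ne.symm hy0), hy.2⟩
    calc hInvDeriv μ ν g y ≤ Real.exp M * ((y + 1) ^ (μ - ν) * y ^ (ν - 1)) :=
        phi_upper hμ1 hν1 hν2 hgM hy.1
    _ ≤ Real.exp M * (x + 1) ^ (μ - ν) * y ^ (ν - 1) := by
        rw [mul_assoc]
        have h2 : (y + 1) ^ (μ - ν) ≤ (x + 1) ^ (μ - ν) :=
          Real.rpow_le_rpow (by linarith [hy.1]) (by linarith [hy.2]) (by linarith)
        have h3 : (0:ℝ) ≤ y ^ (ν - 1) := Real.rpow_nonneg hy.1.le _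
        have := mul_le_mul_of_nonneg_right h2 h3
        nlinarith [Real.exp_pos M, mul_le_mul_of_nonneg_left this (Real.exp_pos M).le]
  have := intervalIntegral.integral_mono_ae_restrict hx.le hint hintu
    (by exact hmono)
  rw [hInv]
  refine le_trans this (le_of_eq ?_)
  rw [intervalIntegral.integral_const_mul, integral_rpow (Or.inl (by linarith))]
  rw [Real.zero_rpow (by linarith : ν - 1 + 1 ≠ 0)]
  have : ν - 1 + 1 = ν := by ring
  rw [this]
  field_simp
  ring

include hμ1 hν1 hν2 hc hgM in
lemma h_pos {x : ℝ} (hx : 0 < x) : 0 < hInv μ ν g x :=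
  lt_of_lt_of_le (by positivity) (h_lower hμ1 hν1 hν2 hc hgM ν hν1 (Or.inl rfl) hx)

end HBounds
section Symm
variable {μ ν M : ℝ} {g : ℝ → ℝ}

lemma g_even (hGsymm : ∀ x : ℝ, Gfun μ ν g (-x) = Gfun μ ν g x) (x : ℝ) :
    g (-x) = g x := by
  have h := hGsymm x
  rw [Gfun, Gfun, show (-x:ℝ)^2 = x^2 by ring] at h
  linarith

lemma phi_even (hGsymm : ∀ x : ℝ, Gfun μ ν g (-x) = Gfun μ ν g x) (x : ℝ) :
    hInvDeriv μ ν g (-x) = hInvDeriv μ ν g x := by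
  rw [hInvDeriv, hInvDeriv, abs_neg, g_even hGsymm x, show (-x:ℝ)^2 = x^2 by ring]

lemma h_odd (hGsymm : ∀ x : ℝ, Gfun μ ν g (-x) = Gfun μ ν g x) (x : ℝ) :
    hInv μ ν g (-x) = -hInv μ ν g x := by
  have key : (∫ y in (0:ℝ)..x, hInvDeriv μ ν g (-y)) =
      ∫ y in (-x)..(-(0:ℝ)), hInvDeriv μ ν g y :=
    intervalIntegral.integral_comp_neg (f := hInvDeriv μ ν g)
  have keva : ∀ y : ℝ, hInvDeriv μ ν g (-y) = hInvDeriv μ ν g y := phi_even hGsymm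
  simp only [keva, neg_zero] at key
  have hsym : (∫ y in (-x)..(0:ℝ), hInvDeriv μ ν g y) =
      -∫ y in (0:ℝ)..(-x), hInvDeriv μ ν g y := intervalIntegral.integral_symm _ _
  show (∫ y in (0:ℝ)..(-x), hInvDeriv μ ν g y) = -∫ y in (0:ℝ)..x, hInvDeriv μ ν g y
  rw [key, hsym]; ring

lemma Bfun_even (hGsymm : ∀ x : ℝ, Gfun μ ν g (-x) = Gfun μ ν g x) (x : ℝ) :
    Bfun μ ν g (-x) = Bfun μ ν g x := by
  rw [Bfun, Bfun, h_odd hGsymm, phi_even hGsymm]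
  ring_nf

lemma deriv_Bfun_symm (hGsymm : ∀ x : ℝ, Gfun μ ν g (-x) = Gfun μ ν g x) (x : ℝ) :
    deriv (Bfun μ ν g) (-x) = -deriv (Bfun μ ν g) x := by
  have heq : Bfun μ ν g = fun y => Bfun μ ν g (-y) := by
    funext y; rw [Bfun_even hGsymm]
  conv_lhs => rw [heq]
  rw [deriv_comp_neg]
  simp

end Symm
section PhiDeriv
variable {μ ν M : ℝ} {g : ℝ → ℝ}
variable (hμ1 : 1 / 2 < μ) (hμ2 : μ ≤ 2) (hν1 : 0 < ν) (hν2 : ν < 1 / 2)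

include hμ1 hν1 hν2 in
lemma phi_hasDeriv {x : ℝ} (hx : 0 < x) (hg : DifferentiableAt ℝ g x) :
    HasDerivAt (hInvDeriv μ ν g)
      (hInvDeriv μ ν g x *
        ((ν - 1) / x + (μ - ν) * x / (x ^ 2 + 1) + deriv g x)) x := by
  have hx2 : (0:ℝ) < x ^ 2 + 1 := by positivity
  have ha : HasDerivAt (fun y : ℝ => y ^ (ν - 1)) ((ν - 1) * x ^ (ν - 1 - 1)) x :=
    Real.hasDerivAt_rpow_const (Or.inl hx.ne')
  have hq : HasDerivAt (fun y : ℝ => y ^ 2 + 1) (2 * x) x := by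
    simpa using ((hasDerivAt_pow 2 x).add_const 1)
  have hb : HasDerivAt (fun y : ℝ => (y ^ 2 + 1) ^ ((μ - ν) / 2))
      (2 * x * ((μ - ν) / 2) * (x ^ 2 + 1) ^ ((μ - ν) / 2 - 1)) x :=
    hq.rpow_const (Or.inl hx2.ne')
  have hcexp : HasDerivAt (fun y : ℝ => Real.exp (g y))
      (Real.exp (g x) * deriv g x) x := by
    simpa [mul_comm] using (hg.hasDerivAt).exp
  have hprod := (ha.fun_mul hb).fun_mul hcexp
  have heq : hInvDeriv μ ν g =ᶠ[nhds x]
      (fun y : ℝ => y ^ (ν - 1) * (y ^ 2 + 1) ^ ((μ - ν) / 2) * Real.exp (g y)) := by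
    filter_upwards [IsOpen.mem_nhds isOpen_Ioi hx] with y hy
    rw [hInvDeriv, abs_of_pos hy]
  refine (HasDerivAt.congr_of_eventuallyEq ?_ heq)
  refine hprod.congr_deriv ?_
  rw [hInvDeriv, abs_of_pos hx]
  have e2 : x ^ (ν - 1 - 1) = x ^ ν / x / x := by
    rw [Real.rpow_sub_one hx.ne', Real.rpow_sub_one hx.ne']
  have e3 : (x ^ 2 + 1) ^ ((μ - ν) / 2 - 1) = (x ^ 2 + 1) ^ ((μ - ν) / 2) / (x ^ 2 + 1) :=
    Real.rpow_sub_one hx2.ne' _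
  have e1 : x ^ (ν - 1) = x ^ ν / x := Real.rpow_sub_one hx.ne' _
  rw [e2, e3, e1]
  field_simp

end PhiDeriv
section Key
variable {μ ν M : ℝ} {g : ℝ → ℝ}
variable (hμ1 : 1 / 2 < μ) (hμ2 : μ ≤ 2) (hν1 : 0 < ν) (hν2 : ν < 1 / 2)
variable (hc : Continuous g) (hgM : ∀ x : ℝ, |g x| ≤ M)

include hμ1 hμ2 hν1 hν2 hc hgM in
lemma key_bound (hM : 0 < M)
    (hdg : ∀ x : ℝ, x ≠ 0 → DifferentiableAt ℝ g x)
    (hxg : ∀ x : ℝ, x ≠ 0 → |x * deriv g x| ≤ M)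
    {Kk : ℝ} (hKk : 0 ≤ Kk) (hκ0 : 0 ≤ kappa μ ν g) (hκ : kappa μ ν g ≤ Kk)
    {p x : ℝ} (hx : 0 < x)
    (hDup : hInvDeriv μ ν g x ≤ 4 * Real.exp M * x ^ (p - 1))
    (hDlo : Real.exp (-M) * x ^ (p - 1) ≤ hInvDeriv μ ν g x)
    (hhup : hInv μ ν g x ≤ 4 * Real.exp M / ν * x ^ p)
    (hhlo : Real.exp (-M) / 2 * x ^ p ≤ hInv μ ν g x) :
    |deriv (Bfun μ ν g) x / hInvDeriv μ ν g x| ≤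
      Kk * ((4 * Real.exp M / ν) * (4 * Real.exp M) ^ 2 * (7 + 2 * M)
        + (4 * Real.exp M) ^ 3) * (4 * Real.exp (7 * M)) * x ^ (1 - 4 * p) := by
  set E := Real.exp M with hE
  have hE0 : (0:ℝ) < E := Real.exp_pos M
  set D := hInvDeriv μ ν g with hD
  set h := hInv μ ν g with hh
  set κ := kappa μ ν g with hκdef
  set ψ : ℝ := (ν - 1) / x + (μ - ν) * x / (x ^ 2 + 1) + deriv g x with hψdef
  have hDpos : 0 < D x := phi_pos hx.ne'
  have hhpos : 0 < h x := h_pos hμ1 hν1 hν2 hc hgM hx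
  have hWd : HasDerivAt (fun y : ℝ => y * h y * D y ^ 2)
      ((1 * h x + x * D x) * D x ^ 2 + x * h x * (2 * D x ^ 1 * (D x * ψ))) x := by
    have h1 : HasDerivAt (fun y : ℝ => y * h y) (1 * h x + x * D x) x :=
      (hasDerivAt_id x).mul (h_hasDeriv hμ1 hν1 hν2 hc hgM hx.ne')
    have h2 : HasDerivAt (fun y : ℝ => D y ^ 2) (2 * D x ^ 1 * (D x * ψ)) x :=
      HasDerivAt.pow (n := 2) (phi_hasDeriv hμ1 hν1 hν2 hx (hdg x hx.ne'))
    exact h1.mul h2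
  have hW0 : x * h x * D x ^ 2 ≠ 0 := by positivity
  set N : ℝ := (1 * h x + x * D x) * D x ^ 2 + x * h x * (2 * D x ^ 1 * (D x * ψ)) with hN
  have hBd : HasDerivAt (Bfun μ ν g)
      ((0 * (x * h x * D x ^ 2) - κ * N) / (x * h x * D x ^ 2) ^ 2) x := by
    have heq : Bfun μ ν g = fun y => κ / (y * h y * D y ^ 2) := rfl
    rw [heq]
    exact (hasDerivAt_const x κ).div hWd hW0
  rw [hBd.deriv]
  have hψb : |ψ| ≤ (3 + M) / x := by
    have h1 : |(ν - 1) / x| ≤ 1 / x := by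
      rw [abs_div, abs_of_pos hx]
      gcongr
      rw [abs_le]; constructor <;> linarith
    have h2 : |(μ - ν) * x / (x ^ 2 + 1)| ≤ 2 / x := by
      have hx2 : (0:ℝ) < x ^ 2 + 1 := by positivity
      rw [abs_div, abs_of_pos hx2, abs_of_pos (by nlinarith : (0:ℝ) < (μ - ν) * x)]
      rw [div_le_div_iff₀ hx2 hx]
      nlinarith
    have h3 : |deriv g x| ≤ M / x := by
      have hb := hxg x hx.ne'
      rw [abs_mul, abs_of_pos hx] at hb
      rw [le_div_iff₀ hx]
      linarith [hb]
    calc |ψ| ≤ |(ν - 1) / x + (μ - ν) * x / (x ^ 2 + 1)| + |deriv g x| := abs_add_le _ _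
    _ ≤ (|(ν - 1) / x| + |(μ - ν) * x / (x ^ 2 + 1)|) + |deriv g x| := by
        gcongr; exact abs_add_le _ _
    _ ≤ (1 / x + 2 / x) + M / x := by gcongr
    _ = (3 + M) / x := by ring
  have hxp : ∀ a b : ℝ, x ^ a * x ^ b = x ^ (a + b) := fun a b => (Real.rpow_add hx _ _).symm
  have hxpow : (0:ℝ) < x ^ (p - 1) := Real.rpow_pos_of_pos hx _
  have hxpow2 : (0:ℝ) < x ^ p := Real.rpow_pos_of_pos hx _
  set K1 : ℝ := (4 * E / ν) * (4 * E) ^ 2 * (7 + 2 * M) + (4 * E) ^ 3 with hK1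
  have hK1pos : 0 < K1 := by rw [hK1]; positivity
  have hnum : |N| ≤ K1 * x ^ (3 * p - 2) := by
    have e1 : N = h x * D x ^ 2 + x * D x ^ 3 + 2 * x * h x * D x ^ 2 * ψ := by
      rw [hN]; ring
    rw [e1]
    have b1 : h x * D x ^ 2 ≤ (4 * E / ν) * (4 * E) ^ 2 * x ^ (3 * p - 2) := by
      calc h x * D x ^ 2 ≤ (4 * E / ν * x ^ p) * (4 * E * x ^ (p - 1)) ^ 2 := by
            gcongr
      _ = (4 * E / ν) * (4 * E) ^ 2 * (x ^ p * (x ^ (p - 1) * x ^ (p - 1))) := by ring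
      _ = (4 * E / ν) * (4 * E) ^ 2 * x ^ (3 * p - 2) := by
            rw [hxp, hxp]; congr 1; congr 1; ring
    have b2 : x * D x ^ 3 ≤ (4 * E) ^ 3 * x ^ (3 * p - 2) := by
      calc x * D x ^ 3 ≤ x * (4 * E * x ^ (p - 1)) ^ 3 := by gcongr
      _ = (4 * E) ^ 3 * (x ^ (1:ℝ) * (x ^ (p - 1) * (x ^ (p - 1) * x ^ (p - 1)))) := by
            rw [Real.rpow_one]; ring
      _ = (4 * E) ^ 3 * x ^ (3 * p - 2) := by
            rw [hxp, hxp, hxp]; congr 1; congr 1; ring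
    have b3 : |2 * x * h x * D x ^ 2 * ψ| ≤
        2 * (3 + M) * ((4 * E / ν) * (4 * E) ^ 2) * x ^ (3 * p - 2) := by
      rw [abs_mul]
      have hfac : |2 * x * h x * D x ^ 2| = 2 * x * h x * D x ^ 2 := abs_of_pos (by positivity)
      rw [hfac]
      calc 2 * x * h x * D x ^ 2 * |ψ| ≤
          2 * x * (4 * E / ν * x ^ p) * (4 * E * x ^ (p - 1)) ^ 2 * ((3 + M) / x) := by
            gcongr
      _ = 2 * (3 + M) * ((4 * E / ν) * (4 * E) ^ 2) *
            (x ^ p * (x ^ (p - 1) * x ^ (p - 1))) * (x / x) := by ring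
      _ = 2 * (3 + M) * ((4 * E / ν) * (4 * E) ^ 2) * x ^ (3 * p - 2) := by
            rw [div_self hx.ne', hxp, hxp, mul_one]; congr 1; congr 1; ring
    calc |h x * D x ^ 2 + x * D x ^ 3 + 2 * x * h x * D x ^ 2 * ψ|
        ≤ |h x * D x ^ 2 + x * D x ^ 3| + |2 * x * h x * D x ^ 2 * ψ| := abs_add_le _ _
    _ ≤ (h x * D x ^ 2 + x * D x ^ 3) + |2 * x * h x * D x ^ 2 * ψ| := by
          gcongr
          rw [abs_of_pos (by positivity)]
    _ ≤ (4 * E / ν) * (4 * E) ^ 2 * x ^ (3 * p - 2) + (4 * E) ^ 3 * x ^ (3 * p - 2)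
          + 2 * (3 + M) * ((4 * E / ν) * (4 * E) ^ 2) * x ^ (3 * p - 2) := by
          exact add_le_add (add_le_add b1 b2) b3
    _ = K1 * x ^ (3 * p - 2) := by rw [hK1]; ring
  -- denominator lower bound
  have hx2' : x ^ (2:ℝ) = x ^ 2 := by
    rw [show (2:ℝ) = ((2:ℕ):ℝ) by norm_num, Real.rpow_natCast]
  have A1 : (x ^ p) ^ 2 = x ^ (p * 2) := by
    rw [← Real.rpow_natCast (x ^ p) 2, ← Real.rpow_mul hx.le]
    norm_num
  have A2 : (x ^ (p - 1)) ^ 5 = x ^ ((p - 1) * 5) := by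
    rw [← Real.rpow_natCast (x ^ (p - 1)) 5, ← Real.rpow_mul hx.le]
    norm_num
  have hexp : Real.exp (-(7 * M)) = Real.exp (-M) ^ 2 * Real.exp (-M) ^ 5 := by
    rw [← Real.exp_nat_mul, ← Real.exp_nat_mul, ← Real.exp_add]
    congr 1
    push_cast
    ring
  have L : x ^ (7 * p - 3) = x ^ (2:ℝ) * x ^ (p * 2) * x ^ ((p - 1) * 5) := by
    rw [hxp, hxp]; congr 1; ring
  have hden : Real.exp (-(7 * M)) / 4 * x ^ (7 * p - 3) ≤ (x * h x * D x ^ 2) ^ 2 * D x := by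
    have e1 : (x * h x * D x ^ 2) ^ 2 * D x = x ^ 2 * h x ^ 2 * D x ^ 5 := by ring
    rw [e1]
    calc Real.exp (-(7 * M)) / 4 * x ^ (7 * p - 3)
        = x ^ (2:ℝ) * (Real.exp (-M) / 2 * x ^ p) ^ 2 * (Real.exp (-M) * x ^ (p - 1)) ^ 5 := by
          rw [hexp, L, mul_pow, mul_pow, div_pow, A1, A2]
          ring
    _ ≤ x ^ 2 * h x ^ 2 * D x ^ 5 := by
          rw [hx2']
          gcongr <;> positivity
  -- assemble
  have hWpos : 0 < (x * h x * D x ^ 2) ^ 2 * D x := by positivity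
  have hsplit : (0 * (x * h x * D x ^ 2) - κ * N) / (x * h x * D x ^ 2) ^ 2 / D x
      = -(κ * N / ((x * h x * D x ^ 2) ^ 2 * D x)) := by
    field_simp
    ring
  rw [hsplit, abs_neg, abs_div, abs_of_pos hWpos, abs_mul, abs_of_nonneg hκ0]
  have hfinal : κ * |N| / ((x * h x * D x ^ 2) ^ 2 * D x)
      ≤ Kk * (K1 * x ^ (3 * p - 2)) / (Real.exp (-(7 * M)) / 4 * x ^ (7 * p - 3)) := by
    apply div_le_div₀ (by positivity) (mul_le_mul hκ hnum (abs_nonneg _) hKk)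
      (by positivity) hden
  refine hfinal.trans (le_of_eq ?_)
  have hxsplit : x ^ (3 * p - 2) = x ^ (1 - 4 * p) * x ^ (7 * p - 3) := by
    rw [hxp]; congr 1; ring
  rw [hxsplit, Real.exp_neg]
  have hxpow3 : (0:ℝ) < x ^ (7 * p - 3) := Real.rpow_pos_of_pos hx _
  field_simp
end Key
section Kappa
variable {μ ν M : ℝ} {g : ℝ → ℝ}
variable (hμ1 : 1 / 2 < μ) (hμ2 : μ ≤ 2) (hν1 : 0 < ν) (hν2 : ν < 1 / 2)
variable (hc : Continuous g) (hgM : ∀ x : ℝ, |g x| ≤ M)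
variable (hGsymm : ∀ x : ℝ, Gfun μ ν g (-x) = Gfun μ ν g x)

include hμ1 hμ2 hν1 hν2 hc hgM hGsymm in
lemma f_even (x : ℝ) :
    1 / ((-x) * hInv μ ν g (-x) * hInvDeriv μ ν g (-x))
      = 1 / (x * hInv μ ν g x * hInvDeriv μ ν g x) := by
  rw [h_odd hGsymm, phi_even hGsymm]
  ring_nf

include hμ1 hμ2 hν1 hν2 hc hgM in
lemma f_pos {x : ℝ} (hx : 0 < x) :
    0 < 1 / (x * hInv μ ν g x * hInvDeriv μ ν g x) := by
  have := h_pos hμ1 hν1 hν2 hc hgM hx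
  have := phi_pos (μ := μ) (ν := ν) (g := g) hx.ne'
  positivity

include hμ1 hμ2 hν1 hν2 hc hgM hGsymm in
lemma f_nonneg (x : ℝ) : 0 ≤ 1 / (x * hInv μ ν g x * hInvDeriv μ ν g x) := by
  rcases lt_trichotomy x 0 with hx | hx | hx
  · rw [show x = -(-x) by ring, f_even hμ1 hμ2 hν1 hν2 hc hgM hGsymm]
    exact (f_pos hμ1 hμ2 hν1 hν2 hc hgM (by linarith)).le
  · simp [hx]
  · exact (f_pos hμ1 hμ2 hν1 hν2 hc hgM hx).le

include hμ1 hμ2 hν1 hν2 hc hgM in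
lemma f_contAt {x : ℝ} (hx : 0 < x) :
    ContinuousAt (fun y => 1 / (y * hInv μ ν g y * hInvDeriv μ ν g y)) x := by
  have hden : x * hInv μ ν g x * hInvDeriv μ ν g x ≠ 0 := by
    have := h_pos hμ1 hν1 hν2 hc hgM hx
    have := phi_pos (μ := μ) (ν := ν) (g := g) hx.ne'
    positivity
  have hch : ContinuousAt (hInv μ ν g) x := (h_hasDeriv hμ1 hν1 hν2 hc hgM hx.ne').continuousAt
  have hcD : ContinuousAt (hInvDeriv μ ν g) x :=
    (phi_contOn hμ1 hν1 hν2 hc).continuousAt (IsOpen.mem_nhds isOpen_compl_singleton hx.ne')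
  exact (continuousAt_const.div ((continuousAt_id.mul hch).mul hcD) hden)

include hμ1 hμ2 hν1 hν2 hc hgM in
lemma f_upper (p : ℝ) (hp1 : 0 < p) (hp2 : p ≤ 2) (hple : p = ν ∨ p = μ) {x : ℝ} (hx : 0 < x) :
    1 / (x * hInv μ ν g x * hInvDeriv μ ν g x) ≤ p * Real.exp (2 * M) * x ^ (-(2 * p)) := by
  have hhl := h_lower hμ1 hν1 hν2 hc hgM p hp1 hple hx
  have hDl : Real.exp (-M) * x ^ (p - 1) ≤ hInvDeriv μ ν g x := by
    rcases hple with h | h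
    · rw [h]; exact phi_lower1 hμ1 hν1 hν2 hgM hx
    · rw [h]; exact phi_lower2 hμ1 hν1 hν2 hgM hx
  have hxp : ∀ a b : ℝ, x ^ a * x ^ b = x ^ (a + b) := fun a b => (Real.rpow_add hx _ _).symm
  have hlow : Real.exp (-M) / p * Real.exp (-M) / 1 * x ^ (2 * p)
      ≤ x * hInv μ ν g x * hInvDeriv μ ν g x := by
    calc Real.exp (-M) / p * Real.exp (-M) / 1 * x ^ (2 * p)
        = x ^ (1:ℝ) * (Real.exp (-M) / p * x ^ p) * (Real.exp (-M) * x ^ (p - 1)) := by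
          rw [show x ^ (1:ℝ) * (Real.exp (-M) / p * x ^ p) * (Real.exp (-M) * x ^ (p - 1))
              = Real.exp (-M) / p * Real.exp (-M) * (x ^ (1:ℝ) * x ^ p * x ^ (p - 1)) by ring,
            hxp, hxp]
          rw [show (1:ℝ) + p + (p - 1) = 2 * p by ring]
          ring
    _ ≤ x * hInv μ ν g x * hInvDeriv μ ν g x := by
          rw [Real.rpow_one]
          have hD0 : (0:ℝ) < Real.exp (-M) * x ^ (p - 1) := by positivity
          have hh0 : (0:ℝ) < Real.exp (-M) / p * x ^ p := by positivity
          have s1 : x * (Real.exp (-M) / p * x ^ p) ≤ x * hInv μ ν g x :=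
            mul_le_mul_of_nonneg_left hhl hx.le
          exact mul_le_mul s1 hDl hD0.le
            (mul_nonneg hx.le ((h_pos hμ1 hν1 hν2 hc hgM hx).le))
  have hlowpos : (0:ℝ) < Real.exp (-M) / p * Real.exp (-M) / 1 * x ^ (2 * p) := by positivity
  calc 1 / (x * hInv μ ν g x * hInvDeriv μ ν g x)
      ≤ 1 / (Real.exp (-M) / p * Real.exp (-M) / 1 * x ^ (2 * p)) :=
        one_div_le_one_div_of_le hlowpos hlow
  _ = p * Real.exp (2 * M) * x ^ (-(2 * p)) := by
      rw [Real.exp_neg, Real.rpow_neg hx.le]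
      have h1 : Real.exp (2 * M) = Real.exp M * Real.exp M := by
        rw [← Real.exp_add]; ring_nf
      rw [h1]
      have hxe : x ^ (2 * p) ≠ 0 := (Real.rpow_pos_of_pos hx _).ne'
      have hem : Real.exp M ≠ 0 := (Real.exp_pos M).ne'
      field_simp

include hμ1 hμ2 hν1 hν2 hc hgM hGsymm in
lemma f_integrable :
    Integrable (fun x => 1 / (x * hInv μ ν g x * hInvDeriv μ ν g x)) volume := by
  set f : ℝ → ℝ := fun x => 1 / (x * hInv μ ν g x * hInvDeriv μ ν g x) with hf
  have hIoc : IntegrableOn f (Set.Ioc 0 1) volume := by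
    refine Integrable.mono'
      (g := fun x => ν * Real.exp (2 * M) * x ^ (-(2 * ν)))
      ?_ ?_ ?_
    · have : IntegrableOn (fun x : ℝ => x ^ (-(2 * ν))) (Set.Ioc (0:ℝ) 1) volume := by
        rw [← intervalIntegrable_iff_integrableOn_Ioc_of_le zero_le_one]
        exact intervalIntegral.intervalIntegrable_rpow' (by linarith)
      exact this.const_mul _
    · refine ContinuousOn.aestronglyMeasurable ?_ measurableSet_Ioc
      intro y hy
      exact (f_contAt hμ1 hμ2 hν1 hν2 hc hgM hy.1).continuousWithinAt
    · filter_upwards [ae_restrict_mem measurableSet_Ioc] with y hy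
      rw [Real.norm_eq_abs, abs_of_nonneg (f_nonneg hμ1 hμ2 hν1 hν2 hc hgM hGsymm y)]
      exact f_upper hμ1 hμ2 hν1 hν2 hc hgM ν hν1 (by linarith) (Or.inl rfl) hy.1
  have hIoi : IntegrableOn f (Set.Ioi 1) volume := by
    refine Integrable.mono'
      (g := fun x => μ * Real.exp (2 * M) * x ^ (-(2 * μ)))
      ((integrableOn_Ioi_rpow_of_lt (by linarith) zero_lt_one).const_mul _) ?_ ?_
    · refine ContinuousOn.aestronglyMeasurable ?_ measurableSet_Ioi
      intro y hy
      exact (f_contAt hμ1 hμ2 hν1 hν2 hc hgM (by simp at hy; linarith)).continuousWithinAt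
    · filter_upwards [ae_restrict_mem measurableSet_Ioi] with y hy
      simp only [Set.mem_Ioi] at hy
      rw [Real.norm_eq_abs, abs_of_nonneg (f_nonneg hμ1 hμ2 hν1 hν2 hc hgM hGsymm y)]
      exact f_upper hμ1 hμ2 hν1 hν2 hc hgM μ (by linarith) hμ2 (Or.inr rfl) (by linarith)
  have hpos : IntegrableOn f (Set.Ioi 0) volume := by
    have : Set.Ioc (0:ℝ) 1 ∪ Set.Ioi 1 = Set.Ioi 0 := Set.Ioc_union_Ioi_eq_Ioi zero_le_one
    rw [← this]
    exact hIoc.union hIoi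
  have hneg : IntegrableOn f (Set.Iio 0) volume := by
    have heq : f = fun y => f (-y) := by
      funext y
      rw [hf]
      exact (f_even hμ1 hμ2 hν1 hν2 hc hgM hGsymm y).symm
    rw [← (Measure.measurePreserving_neg (volume : Measure ℝ)).integrableOn_comp_preimage
        (Homeomorph.neg ℝ).measurableEmbedding]
    simp only [neg_preimage, neg_Iio, neg_zero]
    refine hpos.congr_fun ?_ measurableSet_Ioi
    intro y _
    show f y = f (-y)
    exact (f_even hμ1 hμ2 hν1 hν2 hc hgM hGsymm y).symm
  have h0 : IntegrableOn f {(0:ℝ)} volume := by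
    rw [IntegrableOn, Measure.restrict_eq_zero.mpr (by simp)]
    exact integrable_zero_measure
  rw [← integrableOn_univ]
  have : (Set.univ : Set ℝ) = Set.Iio 0 ∪ {0} ∪ Set.Ioi 0 := by
    ext y
    simp only [Set.mem_univ, Set.mem_union, Set.mem_Iio, Set.mem_singleton_iff, Set.mem_Ioi]
    constructor
    · intro _; rcases lt_trichotomy y 0 with h | h | h
      · exact Or.inl (Or.inl h)
      · exact Or.inl (Or.inr h)
      · exact Or.inr h
    · intro _; trivial
  rw [this]
  exact (hneg.union h0).union hpos

include hμ1 hμ2 hν1 hν2 hc hgM hGsymm in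
lemma kappa_bounds (hM : 0 < M) :
    0 ≤ kappa μ ν g ∧ kappa μ ν g ≤ (μ - ν) * Real.pi * (400 * Real.exp M ^ 2) / ν := by
  set f : ℝ → ℝ := fun x => 1 / (x * hInv μ ν g x * hInvDeriv μ ν g x) with hf
  set E := Real.exp M with hE
  have hE1 : (1:ℝ) ≤ E := Real.one_le_exp hM.le
  set c1 : ℝ := ν / (400 * E ^ 2) with hc1
  have hc1pos : 0 < c1 := by rw [hc1]; positivity
  have hflow : ∀ y ∈ Set.Ioc (1:ℝ) 2, c1 ≤ f y := by
    intro y hy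
    have hy1 : (1:ℝ) < y := hy.1
    have hy2 : y ≤ 2 := hy.2
    have hy0 : (0:ℝ) < y := by linarith
    have hyb : (y + 1) ^ (μ - ν) ≤ 9 := by
      calc (y + 1) ^ (μ - ν) ≤ (3:ℝ) ^ (μ - ν) :=
            Real.rpow_le_rpow (by linarith) (by linarith) (by linarith)
      _ ≤ (3:ℝ) ^ (2:ℝ) := Real.rpow_le_rpow_of_exponent_le (by norm_num) (by linarith)
      _ = 9 := by
          rw [show (2:ℝ) = ((2:ℕ):ℝ) by norm_num, Real.rpow_natCast]; norm_num
    have hhu : hInv μ ν g y ≤ 18 * E / ν := by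
      calc hInv μ ν g y ≤ E * (y + 1) ^ (μ - ν) / ν * y ^ ν :=
            h_upper hμ1 hν1 hν2 hc hgM hy0
      _ ≤ E * 9 / ν * 2 := by
          have t2 : y ^ ν ≤ 2 := by
            calc y ^ ν ≤ y ^ (1:ℝ) :=
                Real.rpow_le_rpow_of_exponent_le hy1.le (by linarith)
            _ = y := Real.rpow_one y
            _ ≤ 2 := hy2
          have t1 : E * (y + 1) ^ (μ - ν) / ν ≤ E * 9 / ν := by gcongr
          exact mul_le_mul t1 t2 (Real.rpow_nonneg hy0.le _) (by positivity)
      _ = 18 * E / ν := by ring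
    have hDu : hInvDeriv μ ν g y ≤ 9 * E := by
      calc hInvDeriv μ ν g y ≤ E * ((y + 1) ^ (μ - ν) * y ^ (ν - 1)) :=
            phi_upper hμ1 hν1 hν2 hgM hy0
      _ ≤ E * (9 * 1) := by
          have t2 : y ^ (ν - 1) ≤ 1 :=
            Real.rpow_le_one_of_one_le_of_nonpos hy1.le (by linarith)
          have := mul_le_mul hyb t2 (Real.rpow_nonneg hy0.le _) (by norm_num)
          exact mul_le_mul_of_nonneg_left this (by positivity)
      _ = 9 * E := by ring
    have hden : y * hInv μ ν g y * hInvDeriv μ ν g y ≤ 400 * E ^ 2 / ν := by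
      have hh0 : 0 < hInv μ ν g y := h_pos hμ1 hν1 hν2 hc hgM hy0
      have hD0 : 0 < hInvDeriv μ ν g y := phi_pos hy0.ne'
      calc y * hInv μ ν g y * hInvDeriv μ ν g y ≤ 2 * (18 * E / ν) * (9 * E) := by
            have s1 : y * hInv μ ν g y ≤ 2 * (18 * E / ν) :=
              mul_le_mul hy2 hhu hh0.le (by norm_num)
            exact mul_le_mul s1 hDu hD0.le (by positivity)
      _ = 324 * E ^ 2 / ν := by ring
      _ ≤ 400 * E ^ 2 / ν := by gcongr; norm_num
    have hdenpos : 0 < y * hInv μ ν g y * hInvDeriv μ ν g y := by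
      have hh0 : 0 < hInv μ ν g y := h_pos hμ1 hν1 hν2 hc hgM hy0
      have hD0 : 0 < hInvDeriv μ ν g y := phi_pos hy0.ne'
      positivity
    have h400 : (0:ℝ) < 400 * E ^ 2 / ν := by positivity
    calc c1 = 1 / (400 * E ^ 2 / ν) := by rw [hc1]; field_simp
    _ ≤ 1 / (y * hInv μ ν g y * hInvDeriv μ ν g y) :=
        one_div_le_one_div_of_le hdenpos hden
    _ = f y := rfl
  have hint := f_integrable hμ1 hμ2 hν1 hν2 hc hgM hGsymm
  have hIlow : c1 ≤ ∫ x, f x := by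
    have h1 : c1 * (volume (Set.Ioc (1:ℝ) 2)).toReal ≤ ∫ x in Set.Ioc (1:ℝ) 2, f x :=
      by simpa [smul_eq_mul, mul_comm, Measure.real] using
        setIntegral_ge_of_const_le_real measurableSet_Ioc (by simp) hflow hint.integrableOn
    have h2 : (∫ x in Set.Ioc (1:ℝ) 2, f x) ≤ ∫ x, f x :=
      setIntegral_le_integral hint
        (Filter.Eventually.of_forall (f_nonneg hμ1 hμ2 hν1 hν2 hc hgM hGsymm))
    have h3 : (volume (Set.Ioc (1:ℝ) 2)).toReal = 1 := by
      rw [Real.volume_Ioc]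
      norm_num
    rw [h3, mul_one] at h1
    linarith
  have hIpos : 0 < ∫ x, f x := lt_of_lt_of_le hc1pos hIlow
  have hnum : 0 < (μ - ν) * Real.pi := mul_pos (by linarith) Real.pi_pos
  constructor
  · rw [kappa]
    positivity
  · rw [kappa]
    calc (μ - ν) * Real.pi / ∫ x, f x ≤ (μ - ν) * Real.pi / c1 :=
        div_le_div_of_nonneg_left hnum.le hc1pos hIlow
    _ = (μ - ν) * Real.pi * (400 * E ^ 2) / ν := by
        rw [hc1]
        field_simp

end Kappa
/-- Power-law bounds for `b'' = B'/(h⁻¹)'` (used in Section 4): for `g ∈ X₁` continuously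
differentiable off `0` with `‖g‖_∞ ≤ M` and `|x g'(x)| ≤ M`, we have
`|B'(x)/(h⁻¹)'(x)| ≲ |x|^(1−4ν)` for `0 < |x| ≤ 1` and `≲ |x|^(1−4μ)` for `|x| ≥ 1`. -/
theorem statement19 (μ ν : ℝ) (hμ1 : 1 / 2 < μ) (hμ2 : μ ≤ 2) (hν1 : 0 < ν) (hν2 : ν < 1 / 2)
    (M : ℝ) (hM : 0 < M) :
    ∃ c : ℝ, ∀ g : ℝ → ℝ, Continuous g →
      Filter.Tendsto g Filter.atTop (nhds 0) → Filter.Tendsto g Filter.atBot (nhds 0) →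
      (∀ x : ℝ, Gfun μ ν g (-x) = Gfun μ ν g x) →
      (∀ x y : ℝ, 0 < y → y ≤ x →
        0 ≤ Gfun μ ν g x - Gfun μ ν g y ∧
        Gfun μ ν g x - Gfun μ ν g y ≤ (μ - ν) * (Real.log (x / y) + 2)) →
      (∀ x : ℝ, |g x| ≤ M) →
      (∀ x : ℝ, x ≠ 0 → DifferentiableAt ℝ g x) →
      ContinuousOn (deriv g) {(0 : ℝ)}ᶜ →
      (∀ x : ℝ, x ≠ 0 → |x * deriv g x| ≤ M) →
      (∀ x : ℝ, 0 < |x| → |x| ≤ 1 →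
        |deriv (Bfun μ ν g) x / hInvDeriv μ ν g x| ≤ c * |x| ^ (1 - 4 * ν)) ∧
      (∀ x : ℝ, 1 ≤ |x| →
        |deriv (Bfun μ ν g) x / hInvDeriv μ ν g x| ≤ c * |x| ^ (1 - 4 * μ)) := by
  set E := Real.exp M with hE
  set Kk : ℝ := (μ - ν) * Real.pi * (400 * E ^ 2) / ν with hKk
  set K1 : ℝ := (4 * E / ν) * (4 * E) ^ 2 * (7 + 2 * M) + (4 * E) ^ 3 with hK1
  refine ⟨Kk * K1 * (4 * Real.exp (7 * M)), ?_⟩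
  intro g hc _ _ hGsymm _ hgM hdg _ hxg
  have hE0 : (0:ℝ) < E := Real.exp_pos M
  have hKk0 : 0 ≤ Kk := by
    rw [hKk]
    exact div_nonneg (mul_nonneg (mul_nonneg (by linarith) Real.pi_pos.le)
      (by positivity)) hν1.le
  obtain ⟨hκ0, hκup⟩ := kappa_bounds hμ1 hμ2 hν1 hν2 hc hgM hGsymm hM
  rw [← hE, ← hKk] at hκup
  -- positive-x bounds
  have bound1 : ∀ x : ℝ, 0 < x → x ≤ 1 →
      |deriv (Bfun μ ν g) x / hInvDeriv μ ν g x|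
        ≤ Kk * K1 * (4 * Real.exp (7 * M)) * x ^ (1 - 4 * ν) := by
    intro x hx hx1
    have h4 : (x + 1) ^ (μ - ν) ≤ 4 := by
      calc (x + 1) ^ (μ - ν) ≤ (2:ℝ) ^ (μ - ν) :=
            Real.rpow_le_rpow (by linarith) (by linarith) (by linarith)
      _ ≤ (2:ℝ) ^ (2:ℝ) := Real.rpow_le_rpow_of_exponent_le (by norm_num) (by linarith)
      _ = 4 := by
          rw [show (2:ℝ) = ((2:ℕ):ℝ) by norm_num, Real.rpow_natCast]; norm_num
    have hDup : hInvDeriv μ ν g x ≤ 4 * E * x ^ (ν - 1) := by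
      calc hInvDeriv μ ν g x ≤ E * ((x + 1) ^ (μ - ν) * x ^ (ν - 1)) :=
            phi_upper hμ1 hν1 hν2 hgM hx
      _ ≤ E * (4 * x ^ (ν - 1)) := by
          have := mul_le_mul_of_nonneg_right h4 (Real.rpow_nonneg hx.le (ν - 1))
          exact mul_le_mul_of_nonneg_left this hE0.le
      _ = 4 * E * x ^ (ν - 1) := by ring
    have hhup : hInv μ ν g x ≤ 4 * E / ν * x ^ ν := by
      calc hInv μ ν g x ≤ E * (x + 1) ^ (μ - ν) / ν * x ^ ν :=
            h_upper hμ1 hν1 hν2 hc hgM hx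
      _ ≤ 4 * E / ν * x ^ ν := by
          have h1 : E * (x + 1) ^ (μ - ν) / ν ≤ 4 * E / ν := by
            rw [div_le_div_iff₀ hν1 hν1]
            have := mul_le_mul_of_nonneg_left h4 hE0.le
            nlinarith
          exact mul_le_mul_of_nonneg_right h1 (Real.rpow_nonneg hx.le ν)
    have hhlo : Real.exp (-M) / 2 * x ^ ν ≤ hInv μ ν g x := by
      refine le_trans ?_ (h_lower hμ1 hν1 hν2 hc hgM ν hν1 (Or.inl rfl) hx)
      have h1 : Real.exp (-M) / 2 ≤ Real.exp (-M) / ν :=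
        div_le_div_of_nonneg_left (Real.exp_pos _).le hν1 (by linarith)
      exact mul_le_mul_of_nonneg_right h1 (Real.rpow_nonneg hx.le ν)
    exact key_bound hμ1 hμ2 hν1 hν2 hc hgM hM hdg hxg hKk0 hκ0 hκup hx
      hDup (phi_lower1 hμ1 hν1 hν2 hgM hx) hhup hhlo
  have bound2 : ∀ x : ℝ, 1 ≤ x →
      |deriv (Bfun μ ν g) x / hInvDeriv μ ν g x|
        ≤ Kk * K1 * (4 * Real.exp (7 * M)) * x ^ (1 - 4 * μ) := by
    intro x hx1
    have hx : 0 < x := by linarith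
    have hxmul : x ^ (μ - ν) * x ^ (ν - 1) = x ^ (μ - 1) := by
      rw [← Real.rpow_add hx]; congr 1; ring
    have hxmul2 : x ^ (μ - ν) * x ^ ν = x ^ μ := by
      rw [← Real.rpow_add hx]; congr 1; ring
    have h4 : (x + 1) ^ (μ - ν) ≤ 4 * x ^ (μ - ν) := by
      calc (x + 1) ^ (μ - ν) ≤ (2 * x) ^ (μ - ν) :=
            Real.rpow_le_rpow (by linarith) (by linarith) (by linarith)
      _ = (2:ℝ) ^ (μ - ν) * x ^ (μ - ν) := Real.mul_rpow (by norm_num) hx.le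
      _ ≤ 4 * x ^ (μ - ν) := by
          have h2 : (2:ℝ) ^ (μ - ν) ≤ 4 := by
            calc (2:ℝ) ^ (μ - ν) ≤ (2:ℝ) ^ (2:ℝ) :=
                  Real.rpow_le_rpow_of_exponent_le (by norm_num) (by linarith)
            _ = 4 := by
                rw [show (2:ℝ) = ((2:ℕ):ℝ) by norm_num, Real.rpow_natCast]; norm_num
          exact mul_le_mul_of_nonneg_right h2 (Real.rpow_nonneg hx.le _)
    have hDup : hInvDeriv μ ν g x ≤ 4 * E * x ^ (μ - 1) := by
      calc hInvDeriv μ ν g x ≤ E * ((x + 1) ^ (μ - ν) * x ^ (ν - 1)) :=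
            phi_upper hμ1 hν1 hν2 hgM hx
      _ ≤ E * (4 * x ^ (μ - ν) * x ^ (ν - 1)) := by
          have h5 := mul_le_mul_of_nonneg_right h4 (Real.rpow_nonneg hx.le (ν - 1))
          exact mul_le_mul_of_nonneg_left h5 hE0.le
      _ = 4 * E * (x ^ (μ - ν) * x ^ (ν - 1)) := by ring
      _ = 4 * E * x ^ (μ - 1) := by rw [hxmul]
    have hhup : hInv μ ν g x ≤ 4 * E / ν * x ^ μ := by
      calc hInv μ ν g x ≤ E * (x + 1) ^ (μ - ν) / ν * x ^ ν :=
            h_upper hμ1 hν1 hν2 hc hgM hx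
      _ ≤ E * (4 * x ^ (μ - ν)) / ν * x ^ ν := by
          have h1 : E * (x + 1) ^ (μ - ν) / ν ≤ E * (4 * x ^ (μ - ν)) / ν := by
            rw [div_le_div_iff₀ hν1 hν1]
            have := mul_le_mul_of_nonneg_left h4 hE0.le
            nlinarith
          exact mul_le_mul_of_nonneg_right h1 (Real.rpow_nonneg hx.le ν)
      _ = 4 * E / ν * (x ^ (μ - ν) * x ^ ν) := by ring
      _ = 4 * E / ν * x ^ μ := by rw [hxmul2]
    have hhlo : Real.exp (-M) / 2 * x ^ μ ≤ hInv μ ν g x := by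
      refine le_trans ?_ (h_lower hμ1 hν1 hν2 hc hgM μ (by linarith) (Or.inr rfl) hx)
      have h1 : Real.exp (-M) / 2 ≤ Real.exp (-M) / μ :=
        div_le_div_of_nonneg_left (Real.exp_pos _).le (by linarith) hμ2
      exact mul_le_mul_of_nonneg_right h1 (Real.rpow_nonneg hx.le μ)
    exact key_bound hμ1 hμ2 hν1 hν2 hc hgM hM hdg hxg hKk0 hκ0 hκup hx
      hDup (phi_lower2 hμ1 hν1 hν2 hgM hx) hhup hhlo
  -- reduce negative x to positive x
  have hsym : ∀ x : ℝ, x < 0 →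
      |deriv (Bfun μ ν g) x / hInvDeriv μ ν g x|
        = |deriv (Bfun μ ν g) (-x) / hInvDeriv μ ν g (-x)| := by
    intro x hx
    have h1 : deriv (Bfun μ ν g) x = -deriv (Bfun μ ν g) (-x) := by
      have h := deriv_Bfun_symm hGsymm (-x)
      rwa [neg_neg] at h
    have h2 : hInvDeriv μ ν g x = hInvDeriv μ ν g (-x) := by
      have h := phi_even hGsymm (-x)
      rwa [neg_neg] at h
    rw [h1, h2, neg_div, abs_neg]
  constructor
  · intro x hx0 hx1
    rcases lt_trichotomy x 0 with hx | hx | hx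
    · rw [hsym x hx]
      have : |x| = -x := abs_of_neg hx
      rw [this] at hx1 ⊢
      exact bound1 (-x) (by linarith) hx1
    · simp [hx] at hx0
    · rw [abs_of_pos hx] at hx1 ⊢
      exact bound1 x hx hx1
  · intro x hx1
    rcases lt_trichotomy x 0 with hx | hx | hx
    · rw [hsym x hx]
      have : |x| = -x := abs_of_neg hx
      rw [this] at hx1 ⊢
      exact bound2 (-x) hx1
    · rw [hx] at hx1; simp at hx1; linarith
    · rw [abs_of_pos hx] at hx1 ⊢
      exact bound2 x hx1
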